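/- If G is a graph of diameter d with distance-VC dimension dvc(G) and dual distance-VC dimension dvc*(G), then dvc*(G) ≤ d · dvc(G). -/

import Mathlib

variable {V : Type*}

/-- The hyperedges of the distance hypergraph of `G`: all balls `B(v,r)` for vertices `v`
and radii `0 ≤ r ≤ d` (with `d` the diameter, every ball arises for such a radius). -/
def SimpleGraph.distBalls (G : SimpleGraph V) : Set (Set V) :=
  {B | ∃ (v : V) (r : ℕ), B = {u | G.dist v u ≤ r}}

/-- A set `X` of vertices is shattered by the family `E`. -/
def ShattersSet (E : Set (Set V)) (X : Set V) : Prop :=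
  ∀ Y ⊆ X, ∃ e ∈ E, e ∩ X = Y

/-- A family `A` of hyperedges is shattered in the dual hypergraph. -/
def DualShatters (A : Set (Set V)) : Prop :=
  ∀ B ⊆ A, ∃ x : V, ∀ e ∈ A, x ∈ e ↔ e ∈ B

/-- `c` is the distance-VC dimension of `G`: the VC dimension of its distance
hypergraph. -/
def SimpleGraph.HasDistVCDim (G : SimpleGraph V) (c : ℕ) : Prop :=
  (∃ X : Set V, ShattersSet G.distBalls X ∧ X.ncard = c) ∧
    ∀ X : Set V, ShattersSet G.distBalls X → X.ncard ≤ c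

/-- `c` is the dual distance-VC dimension of `G`. -/
def SimpleGraph.HasDualDistVCDim (G : SimpleGraph V) (c : ℕ) : Prop :=
  (∃ A ⊆ G.distBalls, DualShatters A ∧ A.ncard = c) ∧
    ∀ A ⊆ G.distBalls, DualShatters A → A.ncard ≤ c

/-- For a connected graph on a finite nonempty type the extended diameter is finite. -/
lemma aux_ediam_ne_top [Fintype V] (G : SimpleGraph V) (hG : G.Connected) :
    G.ediam ≠ ⊤ := by
  have : Nonempty V := hG.nonempty
  obtain ⟨u, v, huv⟩ := G.exists_edist_eq_ediam_of_finite
  rw [← huv]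
  exact SimpleGraph.edist_ne_top_iff_reachable.mpr (hG.preconnected u v)

/-- The fibers of a dually shattered family consisting of balls of one common radius `r`
have size at most the (primal) VC dimension: the set of centers is shattered. -/
lemma aux_fiber_bound [Fintype V] (G : SimpleGraph V) (hG : G.Connected) {c : ℕ}
    (hc2 : ∀ X : Set V, ShattersSet G.distBalls X → X.ncard ≤ c)
    (A F : Set (Set V)) (hsh : DualShatters A)
    (hFA : F ⊆ A) (r : ℕ)
    (hFr : ∀ e ∈ F, ∃ v, e = {u | G.dist v u ≤ r}) :
    F.ncard ≤ c := by
  classical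
  have : Nonempty V := hG.nonempty
  have hFr' : ∀ e : Set V, ∃ v : V, e ∈ F → e = {u | G.dist v u ≤ r} := by
    intro e
    by_cases he : e ∈ F
    · obtain ⟨v, hv⟩ := hFr e he
      exact ⟨v, fun _ => hv⟩
    · exact ⟨Classical.arbitrary V, fun h => absurd h he⟩
  choose ctr hctr using hFr'
  have hinj : Set.InjOn ctr F := by
    intro e he f hf h
    rw [hctr e he, hctr f hf, h]
  have hshat : ShattersSet G.distBalls (ctr '' F) := by
    intro Y hY
    obtain ⟨x, hx⟩ := hsh {e | e ∈ F ∧ ctr e ∈ Y} (fun e he => hFA he.1)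
    refine ⟨{u | G.dist x u ≤ r}, ⟨x, r, rfl⟩, ?_⟩
    ext u
    simp only [Set.mem_inter_iff, Set.mem_setOf_eq]
    constructor
    · rintro ⟨hdu, e, heF, rfl⟩
      have hx_e : x ∈ e := by
        rw [hctr e heF]
        show G.dist (ctr e) x ≤ r
        rwa [SimpleGraph.dist_comm]
      exact ((hx e (hFA heF)).1 hx_e).2
    · intro hu
      obtain ⟨e, heF, rfl⟩ := hY hu
      have hx_e : x ∈ e := (hx e (hFA heF)).2 ⟨heF, hu⟩
      rw [hctr e heF] at hx_e
      have : G.dist (ctr e) x ≤ r := hx_e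
      rw [SimpleGraph.dist_comm] at this
      exact ⟨this, ⟨e, heF, rfl⟩⟩
  calc F.ncard = (ctr '' F).ncard := (Set.ncard_image_of_injOn hinj).symm
    _ ≤ c := hc2 _ hshat

/-- If `G` is a graph of diameter `d` with distance-VC dimension `dvc(G)` and dual
distance-VC dimension `dvc*(G)`, then `dvc*(G) ≤ d · dvc(G)`. -/
theorem statement13 [Fintype V] (G : SimpleGraph V) (hG : G.Connected)
    (d c cstar : ℕ) (hd : G.diam = d)
    (hc : G.HasDistVCDim c) (hcstar : G.HasDualDistVCDim cstar) :
    cstar ≤ d * c := by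
  classical
  have hne : Nonempty V := hG.nonempty
  obtain ⟨⟨A, hAsub, hAsh, hAcard⟩, -⟩ := hcstar
  subst hAcard
  have hnt : G.ediam ≠ ⊤ := aux_ediam_ne_top G hG
  have hdist_le : ∀ u v : V, G.dist u v ≤ d := by
    intro u v
    rw [← hd]
    exact G.dist_le_diam hnt
  rcases Nat.eq_zero_or_pos d with hd0 | hdpos
  · -- diameter 0 : the type is a subsingleton and A must be empty
    subst hd0
    have hsub : Subsingleton V := by
      rcases SimpleGraph.diam_eq_zero.mp hd with h | h
      · exact absurd h hnt
      · exact h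
    have hA : A = ∅ := by
      by_contra hAne
      obtain ⟨e, he⟩ := Set.nonempty_iff_ne_empty.mpr hAne
      obtain ⟨x, hx⟩ := hAsh A subset_rfl
      obtain ⟨y, hy⟩ := hAsh ∅ (Set.empty_subset A)
      have hxe : x ∈ e := (hx e he).2 he
      have hye : y ∉ e := fun h => (hy e he).1 h
      exact hye (Subsingleton.elim x y ▸ hxe)
    simp [hA]
  · -- diameter at least 1
    obtain ⟨m, rfl⟩ : ∃ m, d = m + 1 := ⟨d - 1, by omega⟩
    have hVnt : Nontrivial V := G.nontrivial_of_diam_ne_zero (by omega : G.diam ≠ 0)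
    obtain ⟨a, b, hab⟩ := hVnt
    -- first : c ≥ 1
    have hc1 : 1 ≤ c := by
      have h1 : ShattersSet G.distBalls {b} := by
        intro Y hY
        rcases Set.subset_singleton_iff_eq.mp hY with rfl | rfl
        · refine ⟨{u | G.dist a u ≤ 0}, ⟨a, 0, rfl⟩, ?_⟩
          ext w
          simp only [Set.mem_inter_iff, Set.mem_setOf_eq, Set.mem_singleton_iff,
            Set.mem_empty_iff_false, iff_false, not_and]
          rintro h rfl
          exact hab (hG.dist_eq_zero_iff.mp (Nat.le_zero.mp h))
        · refine ⟨{u | G.dist b u ≤ 0}, ⟨b, 0, rfl⟩, ?_⟩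
          ext w
          simp only [Set.mem_inter_iff, Set.mem_setOf_eq, Set.mem_singleton_iff]
          constructor
          · rintro ⟨-, h⟩; exact h
          · rintro rfl; exact ⟨by simp [SimpleGraph.dist_self], rfl⟩
      have := hc.2 {b} h1
      simpa using this
    -- the minimal radius of a ball
    set ρ : Set V → ℕ := fun e =>
      if h : ∃ r : ℕ, ∃ v : V, e = {u | G.dist v u ≤ r} then Nat.find h else 0 with hρdef
    have hρ_ball : ∀ e ∈ A, ∃ v, e = {u | G.dist v u ≤ ρ e} := by
      intro e he
      obtain ⟨v, r, hr⟩ := hAsub he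
      have h : ∃ r : ℕ, ∃ v : V, e = {u | G.dist v u ≤ r} := ⟨r, v, hr⟩
      simp only [hρdef, dif_pos h]
      exact Nat.find_spec h
    have hρ_min : ∀ e ∈ A, ∀ r : ℕ, (∃ v, e = {u | G.dist v u ≤ r}) → ρ e ≤ r := by
      intro e he r hr
      obtain ⟨v, hv⟩ := hr
      have h : ∃ r : ℕ, ∃ v : V, e = {u | G.dist v u ≤ r} := ⟨r, v, hv⟩
      simp only [hρdef, dif_pos h]
      exact Nat.find_le ⟨v, hv⟩
    have hρ_le : ∀ e ∈ A, ρ e ≤ m + 1 := by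
      intro e he
      obtain ⟨v, r, hr⟩ := hAsub he
      rcases le_or_gt r (m + 1) with h | h
      · exact le_trans (hρ_min e he r ⟨v, hr⟩) h
      · apply hρ_min e he (m + 1)
        refine ⟨v, ?_⟩
        rw [hr]
        ext u
        simp only [Set.mem_setOf_eq]
        have := hdist_le v u
        omega
    -- fibers as finsets
    have hAfin : A.Finite := Set.toFinite A
    set AF : Finset (Set V) := hAfin.toFinset with hAFdef
    have hcardA : A.ncard = AF.card := by
      rw [← Set.ncard_coe_finset]
      congr 1
      exact hAfin.coe_toFinset.symm
    have hmaps : ∀ e ∈ AF, ρ e ∈ Finset.range (m + 1 + 1) := by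
      intro e he
      rw [Set.Finite.mem_toFinset] at he
      simp only [Finset.mem_range]
      have := hρ_le e he
      omega
    have hsum : AF.card = ∑ r ∈ Finset.range (m + 1 + 1), (AF.filter fun e => ρ e = r).card :=
      Finset.card_eq_sum_card_fiberwise hmaps
    -- each fiber, as a set, is bounded by c
    have hfiber_set : ∀ r : ℕ, ((AF.filter fun e => ρ e = r) : Set (Set V)) =
        {e | e ∈ A ∧ ρ e = r} := by
      intro r
      ext e
      simp only [Finset.coe_filter, Set.Finite.mem_toFinset, hAFdef, Set.mem_setOf_eq]
    have hfiber_le : ∀ r : ℕ, (AF.filter fun e => ρ e = r).card ≤ c := by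
      intro r
      rw [← Set.ncard_coe_finset, hfiber_set r]
      apply aux_fiber_bound G hG hc.2 A _ hAsh (fun e he => he.1) r
      intro e he
      obtain ⟨v, hv⟩ := hρ_ball e he.1
      exact ⟨v, by rw [← he.2]; exact hv⟩
    -- the radius-0 fiber and the radius-(m+1) fiber together have at most one element
    have h0d : (AF.filter fun e => ρ e = 0).card + (AF.filter fun e => ρ e = m + 1).card ≤ 1 := by
      have hss : (({e | e ∈ A ∧ ρ e = 0} ∪ {e | e ∈ A ∧ ρ e = m + 1}) :
          Set (Set V)).Subsingleton := by
        rintro e (⟨heA, he0⟩ | ⟨heA, hed⟩) f hf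
        · -- e is a singleton ball of radius 0
          obtain ⟨v, hv⟩ := hρ_ball e heA
          rw [he0] at hv
          obtain ⟨x, hx⟩ := hAsh {e} (by simpa using heA)
          have hxe : x ∈ e := (hx e heA).2 rfl
          rcases hf with ⟨hfA, hf0⟩ | ⟨hfA, hfd⟩
          · -- f is also a singleton ball of radius 0
            by_contra hef
            obtain ⟨y, hy⟩ := hAsh {e, f} (by intro g hg; rcases hg with rfl | rfl <;> assumption)
            have hye : y ∈ e := (hy e heA).2 (Or.inl rfl)
            have hyf : y ∈ f := (hy f hfA).2 (Or.inr rfl)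
            obtain ⟨w, hw⟩ := hρ_ball f hfA
            rw [hf0] at hw
            have h1 : y = v := by
              have := hv ▸ hye
              exact (hG.dist_eq_zero_iff.mp (Nat.le_zero.mp this)).symm
            have h2 : y = w := by
              have := hw ▸ hyf
              exact (hG.dist_eq_zero_iff.mp (Nat.le_zero.mp this)).symm
            apply hef
            rw [hv, hw, ← h1, ← h2]
          · -- f is the full ball of radius m+1, hence everything; x ∈ f forces f = e
            obtain ⟨w, hw⟩ := hρ_ball f hfA
            rw [hfd] at hw
            have hxf : x ∈ f := by
              rw [hw]
              exact hdist_le w x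
            have : f ∈ ({e} : Set (Set V)) := (hx f hfA).1 hxf
            exact this.symm
        · -- e is the full ball
          obtain ⟨v, hv⟩ := hρ_ball e heA
          rw [hed] at hv
          rcases hf with ⟨hfA, hf0⟩ | ⟨hfA, hfd⟩
          · obtain ⟨x, hx⟩ := hAsh {f} (by simpa using hfA)
            have hxf : x ∈ f := (hx f hfA).2 rfl
            have hxe : x ∈ e := by
              rw [hv]
              exact hdist_le v x
            exact ((hx e heA).1 hxe)
          · -- both are the full set
            obtain ⟨w, hw⟩ := hρ_ball f hfA
            rw [hfd] at hw
            rw [hv, hw]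
            ext u
            simp only [Set.mem_setOf_eq]
            exact ⟨fun _ => hdist_le w u, fun _ => hdist_le v u⟩
      -- translate the subsingleton statement into a cardinality bound
      by_contra hcon
      push_neg at hcon
      have h2 : 1 ≤ (AF.filter fun e => ρ e = 0).card ∨
          2 ≤ (AF.filter fun e => ρ e = m + 1).card ∨
          (1 ≤ (AF.filter fun e => ρ e = 0).card ∧
            1 ≤ (AF.filter fun e => ρ e = m + 1).card) := by omega
      -- get two distinct elements or contradictory radii
      have hget : ∀ r : ℕ, ∀ e, e ∈ AF.filter (fun e => ρ e = r) →
          e ∈ A ∧ ρ e = r := by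
        intro r e he
        rw [Finset.mem_filter, Set.Finite.mem_toFinset] at he
        exact he
      rcases Nat.lt_or_ge (AF.filter fun e => ρ e = 0).card 2 with h02 | h02
      · rcases Nat.lt_or_ge (AF.filter fun e => ρ e = m + 1).card 2 with hd2 | hd2
        · -- then both fibers have exactly one element each
          have h01 : 1 ≤ (AF.filter fun e => ρ e = 0).card := by omega
          have hd1 : 1 ≤ (AF.filter fun e => ρ e = m + 1).card := by omega
          obtain ⟨e, he⟩ := Finset.card_pos.mp h01
          obtain ⟨f, hf⟩ := Finset.card_pos.mp hd1
          have he' := hget 0 e he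
          have hf' := hget (m + 1) f hf
          have : e = f := hss (Or.inl he') (Or.inr hf')
          rw [this] at he'
          omega
        · -- radius-(m+1) fiber has two distinct elements
          obtain ⟨e, he, f, hf, hef⟩ := Finset.one_lt_card.mp hd2
          exact hef (hss (Or.inr (hget _ e he)) (Or.inr (hget _ f hf)))
      · obtain ⟨e, he, f, hf, hef⟩ := Finset.one_lt_card.mp h02
        exact hef (hss (Or.inl (hget _ e he)) (Or.inl (hget _ f hf)))
    -- put everything together
    obtain ⟨K, hK⟩ : ∃ K, K = m * c := ⟨_, rfl⟩
    have hgoal : (m + 1) * c = K + c := by rw [hK]; ring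
    rw [hcardA, hsum, Finset.sum_range_succ, Finset.sum_range_succ', hgoal]
    have hmid : ∑ i ∈ Finset.range m, (AF.filter fun e => ρ e = i + 1).card ≤ K := by
      rw [hK]
      calc ∑ i ∈ Finset.range m, (AF.filter fun e => ρ e = i + 1).card
          ≤ ∑ _i ∈ Finset.range m, c := Finset.sum_le_sum fun i _ => hfiber_le (i + 1)
        _ = m * c := by rw [Finset.sum_const, Finset.card_range, smul_eq_mul]
    omega
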